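/- Let H be a complex Hilbert space, D ⊆ H a subspace, A : D → H with Krein–von Neumann extension A_N, B ≥ 0 bounded with A_N ≤ B, and A_max^B := B − (B−A)_N. Then a bounded operator à with 0 ≤ à ≤ B is an extension of A if and only if A_N ≤ à ≤ A_max^B. -/

import Mathlib

open scoped ComplexInnerProductSpace

/-- A bounded operator `T` on a complex Hilbert space is positive if its quadratic form
is real and nonnegative. (`S ≤ T` is expressed as `IsPosOp (T - S)`.) -/
def IsPosOp {H : Type*} [NormedAddCommGroup H] [InnerProductSpace ℂ H]
    (T : H →L[ℂ] H) : Prop :=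
  ∀ x : H, (⟪T x, x⟫).im = 0 ∧ 0 ≤ (⟪T x, x⟫).re

lemma isPosOp_iff_isPositive {H : Type*} [NormedAddCommGroup H] [InnerProductSpace ℂ H]
    [CompleteSpace H] (T : H →L[ℂ] H) : IsPosOp T ↔ T.IsPositive := by
  rw [ContinuousLinearMap.isPositive_iff_complex]
  unfold IsPosOp
  refine forall_congr' fun x => and_congr ?_ Iff.rfl
  constructor
  · intro h
    exact Complex.ext (by simp) (by simp [h])
  · intro h
    rw [← h]; simp

lemma quad_zero {a b : ℝ} (hb : 0 ≤ b) (h : ∀ t : ℝ, 0 ≤ t ^ 2 * b + 2 * t * a) :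
    a = 0 := by
  have hp : (0:ℝ) < (b+1)^2 := by positivity
  have h1 := h (-a/(b+1))
  have e : (-a/(b+1)) ^ 2 * b + 2 * (-a/(b+1)) * a = (-(a^2*(b+2)))/(b+1)^2 := by
    field_simp; ring
  rw [e] at h1
  have h2 := (le_div_iff₀ hp).mp h1
  nlinarith [sq_nonneg a]

/-- If `S` is a positive operator and `⟪S x, x⟫ = 0`, then `S x = 0`. -/
lemma pos_apply_eq_zero {H : Type*} [NormedAddCommGroup H] [InnerProductSpace ℂ H]
    [CompleteSpace H] {S : H →L[ℂ] H} (hS : S.IsPositive) {x : H}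
    (hx : ⟪S x, x⟫ = 0) : S x = 0 := by
  have key : ∀ y : H, (⟪S x, y⟫).re = 0 := by
    intro y
    have hsa : ∀ u v : H, ⟪S u, v⟫ = ⟪u, S v⟫ :=
      fun u v => (ContinuousLinearMap.isSelfAdjoint_iff_isSymmetric.mp hS.isSelfAdjoint) u v
    refine quad_zero (b := (⟪S y, y⟫).re) (by simpa using (Complex.le_def.mp (hS.inner_nonneg_left y)).1) fun t => ?_
    have h := (Complex.le_def.mp (hS.inner_nonneg_left (x + (t : ℂ) • y))).1
    have hyx : ⟪S y, x⟫ = starRingEnd ℂ ⟪S x, y⟫ := by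
      rw [hsa y x, inner_conj_symm]
    have expand : ⟪S (x + (t:ℂ) • y), x + (t:ℂ) • y⟫
        = ⟪S x, x⟫ + (t:ℂ) * ⟪S x, y⟫ + (t:ℂ) * ⟪S y, x⟫ + (t:ℂ)^2 * ⟪S y, y⟫ := by
      simp only [map_add, map_smul, inner_add_left, inner_add_right,
        inner_smul_left, inner_smul_right, ContinuousLinearMap.add_apply,
        ContinuousLinearMap.smul_apply, Complex.conj_ofReal]
      ring
    rw [expand, hx, hyx] at h
    simp only [RCLike.re_to_complex, Complex.add_re, Complex.zero_re, Complex.mul_re, Complex.ofReal_re,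
      Complex.ofReal_im, Complex.conj_re, Complex.conj_im] at h
    have hpow : ((t:ℂ)^2).re = t^2 ∧ ((t:ℂ)^2).im = 0 := by
      constructor <;> simp [pow_two, Complex.mul_re, Complex.mul_im]
    calc (0:ℝ) ≤ _ := h
    _ = t ^ 2 * (⟪S y, y⟫).re + 2 * t * (⟪S x, y⟫).re := by
        rw [hpow.1, hpow.2]
        ring
  have : (⟪S x, S x⟫).re = 0 := key (S x)
  have : ‖S x‖ ^ 2 = 0 := by
    rw [← inner_self_eq_norm_sq (𝕜 := ℂ)]; exact this
  simpa using pow_eq_zero_iff (n := 2) (by norm_num) |>.mp this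

/-- A bounded operator `Ã` with `0 ≤ Ã ≤ B` extends `A` if and only if
`A_N ≤ Ã ≤ A_max^B`, where `A_max^B = B − (B−A)_N`. Here `AN` is the Krein–von Neumann
extension of `A` and `BN'` that of `B|_D − A`. -/
theorem stmt15 {H : Type*} [NormedAddCommGroup H] [InnerProductSpace ℂ H] [CompleteSpace H]
    (D : Submodule ℂ H) (A : D →ₗ[ℂ] H) (AN B BN' : H →L[ℂ] H)
    (hANpos : IsPosOp AN) (hANext : ∀ x : D, AN x = A x)
    (hANmin : ∀ T : H →L[ℂ] H, IsPosOp T → (∀ x : D, T x = A x) → IsPosOp (T - AN))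
    (hBpos : IsPosOp B) (hANB : IsPosOp (B - AN))
    (hBN'pos : IsPosOp BN') (hBN'ext : ∀ x : D, BN' x = B x - A x)
    (hBN'min : ∀ T : H →L[ℂ] H, IsPosOp T → (∀ x : D, T x = B x - A x) →
      IsPosOp (T - BN')) :
    ∀ Atil : H →L[ℂ] H, IsPosOp Atil → IsPosOp (B - Atil) →
      ((∀ x : D, Atil x = A x) ↔
        (IsPosOp (Atil - AN) ∧ IsPosOp ((B - BN') - Atil))) := by
  intro Atil hAtilPos hAtilB
  constructor
  · intro hext
    refine ⟨hANmin Atil hAtilPos hext, ?_⟩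
    have h := hBN'min (B - Atil) hAtilB (fun x => by
      simp [ContinuousLinearMap.sub_apply, hext x])
    have : (B - Atil) - BN' = (B - BN') - Atil := by abel
    rwa [this] at h
  · rintro ⟨h1, h2⟩ x
    have hS : (Atil - AN).IsPositive := (isPosOp_iff_isPositive _).mp h1
    -- on D, ((B - BN') - Atil) x = -(Atil - AN) x
    have hDx : ((B - BN') - Atil) (x : H) = -((Atil - AN) (x : H)) := by
      simp only [ContinuousLinearMap.sub_apply, hBN'ext x, hANext x]
      abel
    have him := (h1 (x : H)).1
    have hre1 := (h1 (x : H)).2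
    have hre2 := (h2 (x : H)).2
    rw [hDx, inner_neg_left] at hre2
    simp only [Complex.neg_re, neg_nonneg] at hre2
    have hzero : ⟪(Atil - AN) (x : H), (x : H)⟫ = 0 := by
      apply Complex.ext
      · rw [Complex.zero_re]; exact le_antisymm hre2 hre1
      · simpa using him
    have := pos_apply_eq_zero hS hzero
    have hx : Atil (x : H) = AN (x : H) := by
      rw [ContinuousLinearMap.sub_apply, sub_eq_zero] at this
      exact this
    rw [hx, hANext x]
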